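/- If I is a fixed bounded operator and ψ a fixed vector, then the expectation value I(τ, s) = ⟨ψ, U_τ(s)† I U_τ(s) ψ⟩ is an entire function of τ for each fixed s. -/

import Mathlib

open intervalIntegral MeasureTheory Set

section Dyson

variable {E : Type*} [NormedAddCommGroup E] [NormedSpace ℂ E] [CompleteSpace E]

noncomputable def dysonIter (A : ℝ → E →L[ℂ] E) (x0 : E) : ℕ → ℝ → E
  | 0 => fun _ => x0
  | (n+1) => fun t => ∫ r in (0:ℝ)..t, A r (dysonIter A x0 n r)

variable {A : ℝ → E →L[ℂ] E}

lemma dysonIter_continuous (hAcont : Continuous A) (x0 : E) :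
    ∀ n, Continuous (dysonIter A x0 n)
  | 0 => continuous_const
  | (n+1) => by
      have h : Continuous fun r => A r (dysonIter A x0 n r) :=
        hAcont.clm_apply (dysonIter_continuous hAcont x0 n)
      exact intervalIntegral.continuous_primitive
        (fun a b => h.intervalIntegrable a b) 0

lemma abs_integral_abs_pow (n : ℕ) (t : ℝ) :
    |∫ r in (0:ℝ)..t, |r| ^ n| = |t| ^ (n+1) / (n+1) := by
  rcases le_total 0 t with ht | ht
  · rw [intervalIntegral.integral_congr (g := fun r : ℝ => r ^ n)
      (fun r hr => by
        rw [Set.uIcc_of_le ht] at hr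
        simp [abs_of_nonneg hr.1]),
      integral_pow]
    rw [abs_of_nonneg ht, zero_pow (by omega), sub_zero,
      abs_of_nonneg (div_nonneg (pow_nonneg ht _) (by positivity))]
  · rw [intervalIntegral.integral_congr (g := fun r : ℝ => (-r) ^ n)
      (fun r hr => by
        rw [Set.uIcc_of_ge ht] at hr
        rw [abs_of_nonpos hr.2]),
      intervalIntegral.integral_comp_neg (fun x : ℝ => x ^ n), integral_pow]
    rw [abs_of_nonpos ht, neg_zero, zero_pow (by omega), abs_div, zero_sub, abs_neg,
      abs_of_nonneg (pow_nonneg (neg_nonneg.2 ht) (n+1)),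
      abs_of_nonneg (by positivity : (0:ℝ) ≤ (n:ℝ)+1)]

lemma abs_integral_mono {f g : ℝ → ℝ} (hf : Continuous f) (hg : Continuous g) (t : ℝ)
    (h0 : ∀ r ∈ Set.uIcc (0:ℝ) t, 0 ≤ f r) (h : ∀ r ∈ Set.uIcc (0:ℝ) t, f r ≤ g r) :
    |∫ r in (0:ℝ)..t, f r| ≤ |∫ r in (0:ℝ)..t, g r| := by
  rcases le_total 0 t with ht | ht
  · have huicc : Set.uIcc (0:ℝ) t = Set.Icc 0 t := Set.uIcc_of_le ht
    rw [huicc] at h0 h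
    have h1 : (∫ r in (0:ℝ)..t, f r) ≤ ∫ r in (0:ℝ)..t, g r :=
      intervalIntegral.integral_mono_on ht (hf.intervalIntegrable _ _)
        (hg.intervalIntegrable _ _) (fun r hr => h r hr)
    have h2 : 0 ≤ ∫ r in (0:ℝ)..t, f r :=
      intervalIntegral.integral_nonneg ht (fun r hr => h0 r hr)
    rw [abs_of_nonneg h2, abs_of_nonneg (le_trans h2 h1)]
    exact h1
  · have huicc : Set.uIcc (0:ℝ) t = Set.Icc t 0 := Set.uIcc_of_ge ht
    rw [huicc] at h0 h
    rw [show (∫ r in (0:ℝ)..t, f r) = -∫ r in t..(0:ℝ), f r from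
        intervalIntegral.integral_symm t 0,
      show (∫ r in (0:ℝ)..t, g r) = -∫ r in t..(0:ℝ), g r from
        intervalIntegral.integral_symm t 0, abs_neg, abs_neg]
    have h1 : (∫ r in t..(0:ℝ), f r) ≤ ∫ r in t..(0:ℝ), g r :=
      intervalIntegral.integral_mono_on ht (hf.intervalIntegrable _ _)
        (hg.intervalIntegrable _ _) (fun r hr => h r hr)
    have h2 : 0 ≤ ∫ r in t..(0:ℝ), f r :=
      intervalIntegral.integral_nonneg ht (fun r hr => h0 r hr)
    rw [abs_of_nonneg h2, abs_of_nonneg (le_trans h2 h1)]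
    exact h1

lemma dyson_bound (hAcont : Continuous A) {C : ℝ} (hC : 0 ≤ C)
    (hA : ∀ r x, ‖(A r) x‖ ≤ C * ‖x‖)
    (c : ℂ) (M : ℝ) (hM : 0 ≤ M) (s0 : ℝ)
    (G : ℕ → ℝ → E) (hGc : ∀ n, Continuous (G n))
    (hrec : ∀ n t, G (n+1) t = c • ∫ r in (0:ℝ)..t, A r (G n r))
    (hbase : ∀ t ∈ Set.uIcc (0:ℝ) s0, ‖G 0 t‖ ≤ M) :
    ∀ n, ∀ t ∈ Set.uIcc (0:ℝ) s0,
      ‖G n t‖ ≤ M * (‖c‖ * C * |t|) ^ n / n.factorial := by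
  intro n
  induction n with
  | zero => intro t ht; simpa using hbase t ht
  | succ n ih =>
    intro t ht
    have hsub : Set.uIcc (0:ℝ) t ⊆ Set.uIcc (0:ℝ) s0 :=
      Set.uIcc_subset_uIcc Set.left_mem_uIcc ht
    set K : ℝ := C * M * (‖c‖ * C) ^ n / n.factorial with hK
    have hKnn : 0 ≤ K := by positivity
    have hgc : Continuous fun r => A r (G n r) := hAcont.clm_apply (hGc n)
    have hgb : ∀ r ∈ Set.uIcc (0:ℝ) t, ‖A r (G n r)‖ ≤ K * |r| ^ n := by
      intro r hr
      refine le_trans (hA r _) ?_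
      have h1 : ‖G n r‖ ≤ M * (‖c‖ * C * |r|) ^ n / n.factorial := ih r (hsub hr)
      calc C * ‖G n r‖ ≤ C * (M * (‖c‖ * C * |r|) ^ n / n.factorial) := by
            exact mul_le_mul_of_nonneg_left h1 hC
        _ = K * |r| ^ n := by rw [hK]; ring
    have key : ‖∫ r in (0:ℝ)..t, A r (G n r)‖ ≤ K * (|t| ^ (n+1) / (n+1)) := by
      refine le_trans (intervalIntegral.norm_integral_le_abs_integral_norm) ?_
      refine le_trans (abs_integral_mono (hgc.norm) (by continuity) t
        (fun r _ => norm_nonneg _) hgb) ?_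
      rw [intervalIntegral.integral_const_mul, abs_mul, abs_of_nonneg hKnn,
        abs_integral_abs_pow]
    rw [hrec n t, norm_smul]
    calc ‖c‖ * ‖∫ r in (0:ℝ)..t, A r (G n r)‖
        ≤ ‖c‖ * (K * (|t| ^ (n+1) / (n+1))) := by
          exact mul_le_mul_of_nonneg_left key (norm_nonneg c)
      _ = M * (‖c‖ * C * |t|) ^ (n+1) / (n+1).factorial := by
          rw [hK, Nat.factorial_succ]
          push_cast
          field_simp
          ring



lemma dyson_rep (hAcont : Continuous A) {C : ℝ} (hC : 0 ≤ C)
    (hA : ∀ r x, ‖(A r) x‖ ≤ C * ‖x‖)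
    (x0 : E) (c : ℂ) (u : ℝ → E)
    (hu : ∀ t, HasDerivAt u (c • A t (u t)) t) (hu0 : u 0 = x0) (s0 : ℝ) :
    HasSum (fun n => c ^ n • dysonIter A x0 n s0) (u s0) := by
  have hucont : Continuous u :=
    continuous_iff_continuousAt.2 fun t => (hu t).continuousAt
  have hAu : Continuous fun r => A r (u r) := hAcont.clm_apply hucont
  have huint : ∀ t, u t = x0 + c • ∫ r in (0:ℝ)..t, A r (u r) := by
    intro t
    have h1 : (∫ r in (0:ℝ)..t, c • A r (u r)) = u t - u 0 :=
      intervalIntegral.integral_eq_sub_of_hasDerivAt (fun r _ => hu r)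
        ((continuous_const.smul hAu).intervalIntegrable _ _)
    rw [intervalIntegral.integral_smul] at h1
    rw [h1, hu0]; abel
  set D := dysonIter A x0 with hD
  have hDc : ∀ n, Continuous (D n) := dysonIter_continuous hAcont x0
  set R : ℕ → ℝ → E := fun N t => u t - ∑ n ∈ Finset.range N, c ^ n • D n t with hR
  have hRc : ∀ N, Continuous (R N) := fun N =>
    hucont.sub (continuous_finset_sum _ fun n _ => (hDc n).const_smul _)
  have hRrec : ∀ N t, R (N+1) t = c • ∫ r in (0:ℝ)..t, A r (R N r) := by
    intro N t
    have hint1 : IntervalIntegrable (fun r => A r (u r)) volume 0 t :=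
      hAu.intervalIntegrable _ _
    have hint2 : IntervalIntegrable
        (fun r => ∑ n ∈ Finset.range N, c ^ n • A r (D n r)) volume 0 t :=
      (continuous_finset_sum _ fun n _ =>
        ((hAcont.clm_apply (hDc n)).const_smul _)).intervalIntegrable _ _
    have hmap : ∀ r, A r (R N r)
        = A r (u r) - ∑ n ∈ Finset.range N, c ^ n • A r (D n r) := by
      intro r
      rw [hR]
      simp only [map_sub, map_sum, ContinuousLinearMap.map_smul]
    calc R (N+1) t = u t - ∑ n ∈ Finset.range (N+1), c ^ n • D n t := rfl
      _ = (x0 + c • ∫ r in (0:ℝ)..t, A r (u r))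
          - (x0 + ∑ n ∈ Finset.range N, c ^ (n+1) • D (n+1) t) := by
        rw [← huint t, Finset.sum_range_succ']
        simp [hD, dysonIter, add_comm]
      _ = c • (∫ r in (0:ℝ)..t, A r (u r))
          - ∑ n ∈ Finset.range N, c ^ (n+1) • ∫ r in (0:ℝ)..t, A r (D n r) := by
        have : ∀ n, D (n+1) t = ∫ r in (0:ℝ)..t, A r (D n r) := fun n => by
          rw [hD]; rfl
        simp only [this]; abel
      _ = c • ∫ r in (0:ℝ)..t, A r (R N r) := by
        simp only [hmap]
        rw [intervalIntegral.integral_sub hint1 hint2,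
          intervalIntegral.integral_finset_sum (f := fun n r => c ^ n • A r (D n r))
            (fun n _ => ((hAcont.clm_apply (hDc n)).const_smul _).intervalIntegrable _ _)]
        rw [smul_sub]
        congr 1
        rw [Finset.smul_sum]
        refine Finset.sum_congr rfl fun n _ => ?_
        rw [intervalIntegral.integral_smul, smul_smul, pow_succ, mul_comm (c ^ n) c]
  obtain ⟨M, hMbd⟩ := isCompact_uIcc.exists_bound_of_continuousOn
    (s := Set.uIcc (0:ℝ) s0) hucont.continuousOn
  have hM0 : ∀ t ∈ Set.uIcc (0:ℝ) s0, ‖u t‖ ≤ max M 0 :=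
    fun t ht => le_trans (hMbd t ht) (le_max_left _ _)
  have hRbd : ∀ N, ‖R N s0‖ ≤ max M 0 * (‖c‖ * C * |s0|) ^ N / N.factorial := by
    intro N
    refine dyson_bound hAcont hC hA c (max M 0) (le_max_right _ _) s0 R hRc hRrec
      (fun t ht => by simpa [hR] using hM0 t ht) N s0 Set.right_mem_uIcc
  have htend0 : Filter.Tendsto
      (fun N => max M 0 * (‖c‖ * C * |s0|) ^ N / N.factorial) Filter.atTop (nhds 0) := by
    have := (FloorSemiring.tendsto_pow_div_factorial_atTop (K := ℝ) (‖c‖ * C * |s0|)).const_mul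
      (max M 0)
    simpa [mul_div_assoc] using this
  have hRtend : Filter.Tendsto (fun N => R N s0) Filter.atTop (nhds 0) :=
    squeeze_zero_norm hRbd htend0
  have hpartial : Filter.Tendsto
      (fun N => ∑ n ∈ Finset.range N, c ^ n • D n s0) Filter.atTop (nhds (u s0)) := by
    have h := Filter.Tendsto.const_sub (u s0) hRtend
    simpa [hR, sub_sub_cancel] using h
  have hDbd : ∀ n, ‖D n s0‖ ≤ ‖x0‖ * (C * |s0|) ^ n / n.factorial := by
    intro n
    have := dyson_bound hAcont hC hA 1 ‖x0‖ (norm_nonneg _) s0 D hDc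
      (fun n t => by rw [hD]; simp [dysonIter]) (fun t _ => le_of_eq rfl) n s0
      Set.right_mem_uIcc
    simpa using this
  have hsum2 : Summable (fun n => ‖x0‖ * (‖c‖ * (C * |s0|)) ^ n / n.factorial) := by
    simpa [mul_div_assoc] using
      (Real.summable_pow_div_factorial (‖c‖ * (C * |s0|))).mul_left ‖x0‖
  have hsummable : Summable fun n => c ^ n • D n s0 := by
    refine Summable.of_norm (Summable.of_nonneg_of_le (fun n => norm_nonneg _)
      (fun n => ?_) hsum2)
    rw [norm_smul, norm_pow]
    calc ‖c‖ ^ n * ‖D n s0‖ ≤ ‖c‖ ^ n * (‖x0‖ * (C * |s0|) ^ n / n.factorial) :=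
          mul_le_mul_of_nonneg_left (hDbd n) (by positivity)
      _ = ‖x0‖ * (‖c‖ * (C * |s0|)) ^ n / n.factorial := by rw [mul_pow]; ring
  have h1 := hsummable.hasSum
  have h2 := h1.tendsto_sum_nat
  have h3 : (∑' n, c ^ n • D n s0) = u s0 := tendsto_nhds_unique h2 hpartial
  rwa [h3] at h1

end Dyson

lemma entire_of_coeff_bound {E : Type*} [NormedAddCommGroup E] [NormedSpace ℂ E]
    [CompleteSpace E] (a : ℕ → E) (M K : ℝ) (hK : 0 ≤ K) (hM : 0 ≤ M)
    (ha : ∀ n, ‖a n‖ ≤ M * K ^ n / n.factorial) (τ0 : ℂ) :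
    AnalyticAt ℂ (fun τ : ℂ => ∑' n, τ ^ n • a n) τ0 := by
  set p : FormalMultilinearSeries ℂ ℂ E :=
    fun n => ContinuousMultilinearMap.mkPiRing ℂ (Fin n) (a n) with hp
  have hpn : ∀ n, ‖p n‖ = ‖a n‖ := fun n => ContinuousMultilinearMap.norm_mkPiRing _
  have hrad : p.radius = ⊤ := by
    refine p.radius_eq_top_of_summable_norm fun r => ?_
    have hsum : Summable (fun n => M * (K * r) ^ n / n.factorial) := by
      simpa [mul_div_assoc] using
        (Real.summable_pow_div_factorial (K * r)).mul_left M
    refine Summable.of_nonneg_of_le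
      (fun n => mul_nonneg (norm_nonneg _) (pow_nonneg r.coe_nonneg _)) (fun n => ?_) hsum
    rw [hpn n]
    calc ‖a n‖ * (r:ℝ) ^ n ≤ (M * K ^ n / n.factorial) * (r:ℝ) ^ n :=
          mul_le_mul_of_nonneg_right (ha n) (pow_nonneg r.coe_nonneg _)
      _ = M * (K * r) ^ n / n.factorial := by rw [mul_pow]; ring
  have hball : HasFPowerSeriesOnBall p.sum p 0 p.radius :=
    p.hasFPowerSeriesOnBall (by rw [hrad]; exact ENNReal.zero_lt_top)
  have hfun : (fun τ : ℂ => ∑' n, τ ^ n • a n) = p.sum := by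
    funext τ
    simp only [FormalMultilinearSeries.sum, hp, ContinuousMultilinearMap.mkPiRing_apply,
      Finset.prod_const, Finset.card_univ, Fintype.card_fin]
  rw [hfun]
  exact hball.analyticAt_of_mem (by rw [hrad]; exact edist_lt_top _ _)


/-- If `I` is a fixed bounded operator and `ψ` a fixed vector, then
the expectation value `I(τ,s) = ⟨ψ, U_τ(s)† I U_τ(s) ψ⟩` is an entire function
of `τ` for each fixed `s`.  Here `V_τ(s)` denotes the entire extension of the
adjoint `U_τ(s)†` (solving `i ∂_s V = -τ V H`, `V_τ(0) = 1`), so that for real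
`τ` the function below coincides with `⟨ψ, U_τ(s)† I U_τ(s) ψ⟩`. -/
theorem expectation_value_entire
    {𝓗 : Type*} [NormedAddCommGroup 𝓗] [InnerProductSpace ℂ 𝓗] [CompleteSpace 𝓗]
    (H : ℝ → (𝓗 →L[ℂ] 𝓗))
    (hHcont : Continuous H)
    (hHsa : ∀ s, IsSelfAdjoint (H s))
    (C : ℝ) (hHbdd : ∀ s, ‖H s‖ ≤ C)
    (U V : ℂ → ℝ → (𝓗 →L[ℂ] 𝓗))
    (hU0 : ∀ τ : ℂ, U τ 0 = 1)
    (hUode : ∀ (τ : ℂ) (s : ℝ),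
      HasDerivAt (fun s' => U τ s') ((-Complex.I * τ) • ((H s).comp (U τ s))) s)
    (hV0 : ∀ τ : ℂ, V τ 0 = 1)
    (hVode : ∀ (τ : ℂ) (s : ℝ),
      HasDerivAt (fun s' => V τ s') ((Complex.I * τ) • ((V τ s).comp (H s))) s)
    (Iop : 𝓗 →L[ℂ] 𝓗) (ψ : 𝓗) (s : ℝ) :
    (∀ τ₀ : ℂ, AnalyticAt ℂ (fun τ : ℂ => (inner ℂ ψ ((V τ s) (Iop ((U τ s) ψ))) : ℂ)) τ₀) ∧
    (∀ τ : ℝ, (inner ℂ ψ ((V (τ : ℂ) s) (Iop ((U (τ : ℂ) s) ψ))) : ℂ)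
        = (inner ℂ ((U (τ : ℂ) s) ψ) (Iop ((U (τ : ℂ) s) ψ)) : ℂ)) := by
  have hC0 : 0 ≤ C := le_trans (norm_nonneg _) (hHbdd 0)
  set AU : ℝ → (𝓗 →L[ℂ] 𝓗) →L[ℂ] (𝓗 →L[ℂ] 𝓗) :=
    fun r => (ContinuousLinearMap.compL ℂ 𝓗 𝓗 𝓗) (H r) with hAUdef
  set AV : ℝ → (𝓗 →L[ℂ] 𝓗) →L[ℂ] (𝓗 →L[ℂ] 𝓗) :=
    fun r => (ContinuousLinearMap.compL ℂ 𝓗 𝓗 𝓗).flip (H r) with hAVdef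
  have hAUcont : Continuous AU := (ContinuousLinearMap.compL ℂ 𝓗 𝓗 𝓗).continuous.comp hHcont
  have hAVcont : Continuous AV :=
    (ContinuousLinearMap.compL ℂ 𝓗 𝓗 𝓗).flip.continuous.comp hHcont
  have hAUapp : ∀ r x, AU r x = (H r).comp x := fun r x => rfl
  have hAVapp : ∀ r x, AV r x = x.comp (H r) := fun r x => rfl
  have hAU : ∀ r (x : 𝓗 →L[ℂ] 𝓗), ‖AU r x‖ ≤ C * ‖x‖ := by
    intro r x
    rw [hAUapp]
    exact le_trans (ContinuousLinearMap.opNorm_comp_le _ _)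
      (mul_le_mul_of_nonneg_right (hHbdd r) (norm_nonneg x))
  have hAV : ∀ r (x : 𝓗 →L[ℂ] 𝓗), ‖AV r x‖ ≤ C * ‖x‖ := by
    intro r x
    rw [hAVapp]
    refine le_trans (ContinuousLinearMap.opNorm_comp_le _ _) ?_
    rw [mul_comm C ‖x‖]
    exact mul_le_mul_of_nonneg_left (hHbdd r) (norm_nonneg x)
  have hasSum_U : ∀ τ : ℂ,
      HasSum (fun n => (-Complex.I * τ) ^ n • dysonIter AU 1 n s) (U τ s) := fun τ =>
    dyson_rep hAUcont hC0 hAU 1 (-Complex.I * τ) (U τ)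
      (fun t => by rw [hAUapp]; exact hUode τ t) (hU0 τ) s
  have hasSum_V : ∀ τ : ℂ,
      HasSum (fun n => (Complex.I * τ) ^ n • dysonIter AV 1 n s) (V τ s) := fun τ =>
    dyson_rep hAVcont hC0 hAV 1 (Complex.I * τ) (V τ)
      (fun t => by rw [hAVapp]; exact hVode τ t) (hV0 τ) s
  -- coefficient bounds
  have hDUbd : ∀ n, ‖dysonIter AU 1 n s‖ ≤ ‖(1 : 𝓗 →L[ℂ] 𝓗)‖ * (C * |s|) ^ n / n.factorial := by
    intro n
    have := dyson_bound hAUcont hC0 hAU 1 ‖(1 : 𝓗 →L[ℂ] 𝓗)‖ (norm_nonneg _) s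
      (dysonIter AU 1) (dysonIter_continuous hAUcont 1)
      (fun n t => by rw [one_smul]; rfl) (fun t _ => le_of_eq rfl) n s Set.right_mem_uIcc
    simpa using this
  have hDVbd : ∀ n, ‖dysonIter AV 1 n s‖ ≤ ‖(1 : 𝓗 →L[ℂ] 𝓗)‖ * (C * |s|) ^ n / n.factorial := by
    intro n
    have := dyson_bound hAVcont hC0 hAV 1 ‖(1 : 𝓗 →L[ℂ] 𝓗)‖ (norm_nonneg _) s
      (dysonIter AV 1) (dysonIter_continuous hAVcont 1)
      (fun n t => by rw [one_smul]; rfl) (fun t _ => le_of_eq rfl) n s Set.right_mem_uIcc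
    simpa using this
  set aU : ℕ → (𝓗 →L[ℂ] 𝓗) := fun n => (-Complex.I) ^ n • dysonIter AU 1 n s with haU
  set aV : ℕ → (𝓗 →L[ℂ] 𝓗) := fun n => Complex.I ^ n • dysonIter AV 1 n s with haV
  have hUfun : (fun τ : ℂ => U τ s) = fun τ : ℂ => ∑' n, τ ^ n • aU n := by
    funext τ
    have h : (fun n => τ ^ n • aU n)
        = fun n => (-Complex.I * τ) ^ n • dysonIter AU 1 n s := by
      funext n
      rw [haU, smul_smul, ← mul_pow, mul_comm τ]
    rw [h]
    exact ((hasSum_U τ).tsum_eq).symm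
  have hVfun : (fun τ : ℂ => V τ s) = fun τ : ℂ => ∑' n, τ ^ n • aV n := by
    funext τ
    have h : (fun n => τ ^ n • aV n)
        = fun n => (Complex.I * τ) ^ n • dysonIter AV 1 n s := by
      funext n
      rw [haV, smul_smul, ← mul_pow, mul_comm τ]
    rw [h]
    exact ((hasSum_V τ).tsum_eq).symm
  have hU_an : ∀ τ0 : ℂ, AnalyticAt ℂ (fun τ : ℂ => U τ s) τ0 := by
    intro τ0
    rw [hUfun]
    refine entire_of_coeff_bound aU ‖(1 : 𝓗 →L[ℂ] 𝓗)‖ (C * |s|) (by positivity)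
      (norm_nonneg _) (fun n => ?_) τ0
    rw [haU, norm_smul, norm_pow, norm_neg, Complex.norm_I, one_pow, one_mul]
    exact hDUbd n
  have hV_an : ∀ τ0 : ℂ, AnalyticAt ℂ (fun τ : ℂ => V τ s) τ0 := by
    intro τ0
    rw [hVfun]
    refine entire_of_coeff_bound aV ‖(1 : 𝓗 →L[ℂ] 𝓗)‖ (C * |s|) (by positivity)
      (norm_nonneg _) (fun n => ?_) τ0
    rw [haV, norm_smul, norm_pow, Complex.norm_I, one_pow, one_mul]
    exact hDVbd n
  constructor
  · intro τ0
    have h1 : AnalyticAt ℂ (fun τ : ℂ => (U τ s) ψ) τ0 := by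
      have := (((ContinuousLinearMap.apply ℂ 𝓗 ψ).analyticAt _).comp (hU_an τ0) : AnalyticAt ℂ ((ContinuousLinearMap.apply ℂ 𝓗 ψ) ∘ (fun τ : ℂ => U τ s)) τ0)
      simpa [Function.comp_def] using this
    have h2 : AnalyticAt ℂ (fun τ : ℂ => Iop ((U τ s) ψ)) τ0 := by
      have := ((Iop.analyticAt _).comp h1 : AnalyticAt ℂ (Iop ∘ (fun τ : ℂ => (U τ s) ψ)) τ0)
      simpa [Function.comp_def] using this
    have h3 : AnalyticAt ℂ (fun τ : ℂ => (V τ s) (Iop ((U τ s) ψ))) τ0 := by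
      have := AnalyticAt.comp₂
        ((ContinuousLinearMap.id ℂ (𝓗 →L[ℂ] 𝓗)).analyticAt_bilinear
          (V τ0 s, Iop ((U τ0 s) ψ))) (hV_an τ0) h2
      simpa using this
    have h4 := (((innerSL ℂ ψ).analyticAt _).comp h3 : AnalyticAt ℂ ((innerSL ℂ ψ) ∘ (fun τ : ℂ => (V τ s) (Iop ((U τ s) ψ)))) τ0)
    simpa [Function.comp_def] using h4
  · intro τ
    set W : ℝ → (𝓗 →L[ℂ] 𝓗) := fun t => star (U (τ:ℂ) t) with hW
    have hWode : ∀ t, HasDerivAt W ((Complex.I * τ) • AV t (W t)) t := by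
      intro t
      have h := (hUode (τ:ℂ) t).star
      have heq : star ((-Complex.I * (τ:ℂ)) • ((H t).comp (U (τ:ℂ) t)))
          = (Complex.I * τ) • AV t (W t) := by
        rw [show ((H t).comp (U (τ:ℂ) t)) = H t * U (τ:ℂ) t from rfl]
        simp only [star_smul, star_mul]
        rw [(hHsa t).star_eq]
        congr 1
        simp [Complex.ext_iff]
      rw [heq] at h
      exact h
    have hW0 : W 0 = 1 := by rw [hW]; simp [hU0]
    have hasSum_W : HasSum (fun n => (Complex.I * τ) ^ n • dysonIter AV 1 n s) (W s) :=
      dyson_rep hAVcont hC0 hAV 1 (Complex.I * τ) W hWode hW0 s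
    have hVW : V (τ:ℂ) s = W s := (hasSum_V τ).unique hasSum_W
    rw [hVW]
    show (inner ℂ ψ ((star (U (τ:ℂ) s)) (Iop ((U (τ:ℂ) s) ψ))) : ℂ) = _
    rw [ContinuousLinearMap.star_eq_adjoint, ContinuousLinearMap.adjoint_inner_right]
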